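/- arXiv:0904.2254 — 5 statements merged into one kernel-verified Lean document; each statement's English description precedes it below -/
import Mathlib

section
/- Let X be a stationary Markov chain on a finite state space S = {1, …, N} with transition matrix P = (p_{ij}) and invariant probability distribution π = (π_1, …, π_N) (so π P = π and π_i > 0 for all i). Then there exists a finite collection of directed cycles c = (i_1, …, i_k) of states, with a positive weight w_c for each cycle in the collection, such that for all i, j ∈ S: π_i p_{ij} = Σ_c w_c J_c(i,j), where J_c(i,j) = 1 if the directed cycle c contains the transition i → j and J_c(i,j) = 0 otherwise. -/
open scoped Classical

/-- A directed cycle `(i_0, …, i_len)` of pairwise distinct states in the state space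
`Fin N`, understood cyclically. -/
structure MCycle (N : ℕ) where
  len : ℕ
  f : Fin (len + 1) → Fin N
  inj : Function.Injective f

/-- `J c i j` is the indicator that the directed cycle `c` contains the transition
`i → j`, i.e. that `j` immediately follows `i` in the cyclic order of `c`. -/
noncomputable def MCycle.J {N : ℕ} (c : MCycle N) (i j : Fin N) : ℝ :=
  if ∃ l, c.f l = i ∧ c.f (l + 1) = j then 1 else 0

lemma MCycle.J_nonneg {N : ℕ} (c : MCycle N) (i j : Fin N) : 0 ≤ c.J i j := by
  unfold MCycle.J; split_ifs <;> norm_num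

lemma MCycle.J_row {N : ℕ} (c : MCycle N) (v : Fin N) :
    ∑ j, c.J v j = if ∃ l, c.f l = v then 1 else 0 := by
  by_cases h : ∃ l, c.f l = v
  · obtain ⟨l0, hl0⟩ := h
    rw [if_pos ⟨l0, hl0⟩]
    have hJ : ∀ j, c.J v j = if j = c.f (l0 + 1) then 1 else 0 := by
      intro j
      unfold MCycle.J
      congr 1
      apply propext
      constructor
      · rintro ⟨l, h1, h2⟩
        have hl : l = l0 := c.inj (h1.trans hl0.symm)
        subst hl; exact h2.symm
      · rintro rfl; exact ⟨l0, hl0, rfl⟩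
    rw [Finset.sum_congr rfl fun j _ => hJ j]
    simp
  · rw [if_neg h]
    apply Finset.sum_eq_zero
    intro j _
    unfold MCycle.J
    rw [if_neg]
    rintro ⟨l, h1, _⟩
    exact h ⟨l, h1⟩

lemma MCycle.J_col {N : ℕ} (c : MCycle N) (v : Fin N) :
    ∑ j, c.J j v = if ∃ l, c.f l = v then 1 else 0 := by
  by_cases h : ∃ l, c.f l = v
  · obtain ⟨l0, hl0⟩ := h
    rw [if_pos ⟨l0, hl0⟩]
    have hJ : ∀ i, c.J i v = if i = c.f (l0 - 1) then 1 else 0 := by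
      intro i
      unfold MCycle.J
      congr 1
      apply propext
      constructor
      · rintro ⟨l, h1, h2⟩
        have hl : l + 1 = l0 := c.inj (h2.trans hl0.symm)
        have hl2 : l = l0 - 1 := eq_sub_of_add_eq hl
        rw [← h1, hl2]
      · rintro rfl
        refine ⟨l0 - 1, rfl, ?_⟩
        have : l0 - 1 + 1 = l0 := by abel
        rw [this]; exact hl0
    rw [Finset.sum_congr rfl fun i _ => hJ i]
    simp
  · rw [if_neg h]
    apply Finset.sum_eq_zero
    intro i _
    unfold MCycle.J
    rw [if_neg]
    rintro ⟨l, _, h2⟩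
    exact h ⟨l + 1, h2⟩

lemma exists_cycle {N : ℕ} (Q : Matrix (Fin N) (Fin N) ℝ)
    (hnn : ∀ i j, 0 ≤ Q i j) (hcirc : ∀ v, ∑ j, Q v j = ∑ j, Q j v)
    {i0 j0 : Fin N} (h0 : 0 < Q i0 j0) :
    ∃ c : MCycle N, ∀ l, 0 < Q (c.f l) (c.f (l + 1)) := by
  have hstep : ∀ v : Fin N, 0 < ∑ j, Q v j → ∃ j, 0 < Q v j ∧ 0 < ∑ k, Q j k := by
    intro v hv
    have hex : ∃ j, 0 < Q v j := by
      by_contra hcon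
      push_neg at hcon
      have : ∑ j, Q v j ≤ 0 := Finset.sum_nonpos fun j _ => hcon j
      linarith
    obtain ⟨j, hj⟩ := hex
    refine ⟨j, hj, ?_⟩
    rw [hcirc j]
    exact lt_of_lt_of_le hj (Finset.single_le_sum (fun i _ => hnn i j) (Finset.mem_univ v))
  classical
  set s : Fin N → Fin N := fun v => if h : 0 < ∑ j, Q v j then (hstep v h).choose else v with hs_def
  have hs : ∀ v, 0 < ∑ j, Q v j → 0 < Q v (s v) ∧ 0 < ∑ k, Q (s v) k := by
    intro v h
    simp only [hs_def, dif_pos h]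
    exact (hstep v h).choose_spec
  have hA : ∀ n, 0 < ∑ j, Q (s^[n] i0) j := by
    intro n
    induction n with
    | zero =>
      simpa using lt_of_lt_of_le h0
        (Finset.single_le_sum (fun j _ => hnn i0 j) (Finset.mem_univ j0))
    | succ n ih =>
      rw [Function.iterate_succ_apply']
      exact (hs _ ih).2
  have hginj : ¬Function.Injective (fun m : Fin (N + 1) => s^[m.1] i0) := by
    intro hinj
    have := Fintype.card_le_of_injective _ hinj
    simp at this
  rw [Function.not_injective_iff] at hginj
  obtain ⟨a, b, hab, hne⟩ := hginj
  have key : ∃ m d : ℕ, 0 < d ∧ s^[d] (s^[m] i0) = s^[m] i0 := by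
    rcases Nat.lt_or_ge a.1 b.1 with h | h
    · refine ⟨a.1, b.1 - a.1, by omega, ?_⟩
      rw [← Function.iterate_add_apply]
      have he : b.1 - a.1 + a.1 = b.1 := by omega
      rw [he]; exact hab.symm
    · have h' : b.1 < a.1 := by
        rcases Nat.lt_or_ge b.1 a.1 with h2 | h2
        · exact h2
        · exact absurd (Fin.ext (le_antisymm h2 h)) hne
      refine ⟨b.1, a.1 - b.1, by omega, ?_⟩
      rw [← Function.iterate_add_apply]
      have he : a.1 - b.1 + b.1 = a.1 := by omega
      rw [he]; exact hab
  have hexp : ∃ p : Fin N, (∃ k, 0 < k ∧ s^[k] p = p) ∧ ∀ n, 0 < ∑ j, Q (s^[n] p) j := by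
    obtain ⟨m, d, hd, hpd⟩ := key
    refine ⟨s^[m] i0, ⟨d, hd, hpd⟩, ?_⟩
    intro n
    rw [← Function.iterate_add_apply]
    exact hA (n + m)
  obtain ⟨p, hexk, hApn⟩ := hexp
  have hkspec := Nat.find_spec hexk
  have hkmin0 := fun k' (h : k' < Nat.find hexk) => Nat.find_min hexk h
  set k := Nat.find hexk with hk_def
  obtain ⟨hkpos, hkp⟩ := hkspec
  have hkmin : ∀ k' < k, ¬(0 < k' ∧ s^[k'] p = p) := hkmin0
  have hinj : ∀ a b : ℕ, a < b → b < k → s^[a] p ≠ s^[b] p := by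
    intro a b hab hbk heq
    have h1 : s^[k - b] (s^[a] p) = s^[k - b] (s^[b] p) := by rw [heq]
    rw [← Function.iterate_add_apply, ← Function.iterate_add_apply] at h1
    have h2 : k - b + b = k := by omega
    rw [h2, hkp] at h1
    exact hkmin (k - b + a) (by omega) ⟨by omega, h1⟩
  have hedgep : ∀ n, 0 < Q (s^[n] p) (s^[n + 1] p) := by
    intro n
    rw [Function.iterate_succ_apply']
    exact (hs _ (hApn n)).1
  have hk1 : k - 1 + 1 = k := by omega
  refine ⟨⟨k - 1, fun l => s^[l.1] p, ?_⟩, ?_⟩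
  · intro a b hab
    by_contra hne2
    have ha2 : a.1 < k - 1 + 1 := a.isLt
    have hb2 : b.1 < k - 1 + 1 := b.isLt
    have hk0 : 0 < k := hkpos
    rcases lt_trichotomy a.1 b.1 with h | h | h
    · exact hinj a.1 b.1 h (by omega) hab
    · exact hne2 (Fin.ext h)
    · exact hinj b.1 a.1 h (by omega) hab.symm
  · intro l
    show 0 < Q (s^[l.1] p) (s^[((l + 1 : Fin (k - 1 + 1))).1] p)
    rcases Nat.lt_or_ge l.1 (k - 1) with hl | hl
    · have hlne : l ≠ Fin.last (k - 1) := by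
        intro h
        rw [h] at hl
        simp [Fin.val_last] at hl
      have hval : ((l + 1 : Fin (k - 1 + 1))).1 = l.1 + 1 := by
        rw [Fin.val_add_one, if_neg hlne]
      rw [hval]
      exact hedgep l.1
    · have hl2 : l.1 < k - 1 + 1 := l.isLt
      have hll : l.1 = k - 1 := by omega
      have hlast : l = Fin.last (k - 1) := Fin.ext (by simpa using hll)
      have hval : ((l + 1 : Fin (k - 1 + 1))).1 = 0 := by
        rw [Fin.val_add_one, if_pos hlast]
      have hkk := hedgep (k - 1)
      rw [hk1, hkp] at hkk
      rw [hval, hll]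
      simpa using hkk

lemma circ_decomp {N : ℕ} (n : ℕ) (Q : Matrix (Fin N) (Fin N) ℝ)
    (hnn : ∀ i j, 0 ≤ Q i j) (hcirc : ∀ v, ∑ j, Q v j = ∑ j, Q j v)
    (hcard : (Finset.univ.filter fun p : Fin N × Fin N => 0 < Q p.1 p.2).card ≤ n) :
    ∃ (C : Finset (MCycle N)) (w : MCycle N → ℝ),
      (∀ c ∈ C, 0 < w c) ∧ ∀ i j, Q i j = ∑ c ∈ C, w c * c.J i j := by
  induction n generalizing Q with
  | zero =>
    refine ⟨∅, fun _ => 0, by simp, ?_⟩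
    intro i j
    simp only [Finset.sum_empty]
    by_contra hne
    have hpos : 0 < Q i j := lt_of_le_of_ne (hnn i j) (Ne.symm hne)
    have hm : (i, j) ∈ Finset.univ.filter (fun p : Fin N × Fin N => 0 < Q p.1 p.2) := by
      simp [hpos]
    have := Finset.card_pos.mpr ⟨_, hm⟩
    omega
  | succ n ih =>
    by_cases hex : ∃ i j, 0 < Q i j
    · obtain ⟨i0, j0, h0⟩ := hex
      obtain ⟨c, hc⟩ := exists_cycle Q hnn hcirc h0
      obtain ⟨l₀, _, hmin⟩ := Finset.exists_min_image Finset.univ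
        (fun l => Q (c.f l) (c.f (l + 1))) ⟨0, Finset.mem_univ 0⟩
      set ε := Q (c.f l₀) (c.f (l₀ + 1)) with hε_def
      have hε : 0 < ε := hc l₀
      have hJcase : ∀ i j, c.J i j = 0 ∨ (c.J i j = 1 ∧ ε ≤ Q i j) := by
        intro i j
        unfold MCycle.J
        split_ifs with h
        · right
          obtain ⟨l, h1, h2⟩ := h
          refine ⟨rfl, ?_⟩
          rw [← h1, ← h2]
          exact hmin l (Finset.mem_univ l)
        · left; rfl
      set Q' : Matrix (Fin N) (Fin N) ℝ := fun i j => Q i j - ε * c.J i j with hQ'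
      have hnn' : ∀ i j, 0 ≤ Q' i j := by
        intro i j
        rcases hJcase i j with h | ⟨h, hle⟩
        · simp only [hQ', h, mul_zero, sub_zero]; exact hnn i j
        · simp only [hQ', h, mul_one]; linarith
      have hcirc' : ∀ v, ∑ j, Q' v j = ∑ j, Q' j v := by
        intro v
        simp only [hQ']
        rw [Finset.sum_sub_distrib, Finset.sum_sub_distrib, hcirc v,
          ← Finset.mul_sum, ← Finset.mul_sum, MCycle.J_row, MCycle.J_col]
      have hsub : (Finset.univ.filter fun p : Fin N × Fin N => 0 < Q' p.1 p.2) ⊆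
          (Finset.univ.filter fun p : Fin N × Fin N => 0 < Q p.1 p.2) := by
        intro e he
        simp only [Finset.mem_filter, Finset.mem_univ, true_and] at he ⊢
        have hJnn := c.J_nonneg e.1 e.2
        have hprod : 0 ≤ ε * c.J e.1 e.2 := mul_nonneg hε.le hJnn
        simp only [hQ'] at he
        linarith
      have hmem : (c.f l₀, c.f (l₀ + 1)) ∈
          (Finset.univ.filter fun p : Fin N × Fin N => 0 < Q p.1 p.2) := by
        simp only [Finset.mem_filter, Finset.mem_univ, true_and]
        exact hc l₀
      have hnmem : (c.f l₀, c.f (l₀ + 1)) ∉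
          (Finset.univ.filter fun p : Fin N × Fin N => 0 < Q' p.1 p.2) := by
        simp only [Finset.mem_filter, Finset.mem_univ, true_and, not_lt]
        have hJ1 : c.J (c.f l₀) (c.f (l₀ + 1)) = 1 := by
          unfold MCycle.J; rw [if_pos ⟨l₀, rfl, rfl⟩]
        simp only [hQ', hJ1, mul_one, ← hε_def]
        linarith
      have hcard' : (Finset.univ.filter fun p : Fin N × Fin N => 0 < Q' p.1 p.2).card ≤ n := by
        have hlt := Finset.card_lt_card
          ((Finset.ssubset_iff_of_subset hsub).mpr ⟨_, hmem, hnmem⟩)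
        omega
      obtain ⟨C', w', hw', hsum'⟩ := ih Q' hnn' hcirc' hcard'
      refine ⟨insert c C',
        fun d => (if d ∈ C' then w' d else 0) + (if d = c then ε else 0), ?_, ?_⟩
      · intro d hd
        show 0 < (if d ∈ C' then w' d else 0) + (if d = c then ε else 0)
        by_cases hdC : d ∈ C'
        · have h1 := hw' d hdC
          rw [if_pos hdC]
          have h2 : (0 : ℝ) ≤ if d = c then ε else 0 := by
            split_ifs
            · exact hε.le
            · exact le_refl 0
          linarith
        · have hdc : d = c := by
            rcases Finset.mem_insert.mp hd with h | h
            · exact h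
            · exact absurd h hdC
          rw [if_neg hdC, if_pos hdc]
          simpa using hε
      · intro i j
        show Q i j = ∑ d ∈ insert c C',
          ((if d ∈ C' then w' d else 0) + (if d = c then ε else 0)) * d.J i j
        have hQeq : Q i j = Q' i j + ε * c.J i j := by simp [hQ']
        have hsplit : ∑ d ∈ insert c C',
              ((if d ∈ C' then w' d else 0) + (if d = c then ε else 0)) * d.J i j
            = (∑ d ∈ insert c C', (if d ∈ C' then w' d else 0) * d.J i j)
              + ∑ d ∈ insert c C', (if d = c then ε else 0) * d.J i j := by
          rw [← Finset.sum_add_distrib]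
          exact Finset.sum_congr rfl fun d _ => add_mul _ _ _
        have h1 : ∑ d ∈ insert c C', (if d ∈ C' then w' d else 0) * d.J i j
            = ∑ d ∈ C', w' d * d.J i j := by
          by_cases hcC : c ∈ C'
          · rw [Finset.insert_eq_self.mpr hcC]
            exact Finset.sum_congr rfl fun d hd => by rw [if_pos hd]
          · rw [Finset.sum_insert hcC, if_neg hcC, zero_mul, zero_add]
            exact Finset.sum_congr rfl fun d hd => by rw [if_pos hd]
        have h2 : ∑ d ∈ insert c C', (if d = c then ε else 0) * d.J i j = ε * c.J i j := by
          have hcong : ∀ d, (if d = c then ε else 0) * d.J i j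
              = if d = c then ε * c.J i j else 0 := by
            intro d
            split_ifs with h
            · rw [h]
            · rw [zero_mul]
          rw [Finset.sum_congr rfl fun d _ => hcong d,
            Finset.sum_ite_eq' (insert c C') c fun _ => ε * c.J i j,
            if_pos (Finset.mem_insert_self c C')]
        rw [hsplit, h1, h2, ← hsum' i j, ← hQeq]
    · push_neg at hex
      refine ⟨∅, fun _ => 0, by simp, ?_⟩
      intro i j
      simp only [Finset.sum_empty]
      exact le_antisymm (hex i j) (hnn i j)

/-- **Cycle decomposition of a stationary Markov chain.**
Let `X` be a stationary Markov chain on the finite state space `Fin N` with transition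
matrix `P` and invariant probability distribution `π` (with `π i > 0` for all `i`).
Then there is a finite collection of directed cycles of pairwise distinct states, with a
positive weight for each cycle in the collection, such that
`π i * P i j = ∑_c w_c J_c(i,j)` for all states `i, j`. -/
theorem markov_cycle_decomposition
    {N : ℕ} (hN : 0 < N) (P : Matrix (Fin N) (Fin N) ℝ) (π : Fin N → ℝ)
    (hnn : ∀ i j, 0 ≤ P i j) (hrow : ∀ i, ∑ j, P i j = 1)
    (hπpos : ∀ i, 0 < π i) (hπ1 : ∑ i, π i = 1)
    (hinv : ∀ j, ∑ i, π i * P i j = π j) :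
    ∃ (C : Finset (MCycle N)) (w : MCycle N → ℝ),
      (∀ c ∈ C, 0 < w c) ∧
      ∀ i j, π i * P i j = ∑ c ∈ C, w c * c.J i j := by
  set Q : Matrix (Fin N) (Fin N) ℝ := fun i j => π i * P i j with hQ
  have hQnn : ∀ i j, 0 ≤ Q i j := fun i j => mul_nonneg (hπpos i).le (hnn i j)
  have hcirc : ∀ v, ∑ j, Q v j = ∑ j, Q j v := by
    intro v
    simp only [hQ]
    rw [← Finset.mul_sum, hrow v, mul_one, hinv v]
  obtain ⟨C, w, h1, h2⟩ := circ_decomp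
    (Finset.univ.filter fun p : Fin N × Fin N => 0 < Q p.1 p.2).card Q hQnn hcirc le_rfl
  exact ⟨C, w, h1, fun i j => h2 i j⟩
end

section
/- Let P = (p_{ij}) be an irreducible stochastic matrix on a finite state space S = {1, …, N}, set D = I − P, and for a subset H ⊆ S let D(H) denote the determinant of the submatrix of D with rows and columns indexed by H. Then the vector defined by π_j = D({j}ᶜ) / Σ_{k ∈ S} D({k}ᶜ) is the unique invariant probability distribution of P; in particular Σ_{k ∈ S} D({k}ᶜ) > 0 and D({j}ᶜ) ≥ 0 for all j. -/
/-- `subdet D H` is the determinant of the principal submatrix of `D` with rows and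
columns indexed by the subset `H` (with `subdet D ∅ = 1`). -/
noncomputable def subdet {N : ℕ} (D : Matrix (Fin N) (Fin N) ℝ) (H : Finset (Fin N)) : ℝ :=
  (D.submatrix (fun x : H => (x : Fin N)) (fun x : H => (x : Fin N))).det

open Matrix Finset

lemma adjugate_diag {N : ℕ} (A : Matrix (Fin N) (Fin N) ℝ) (j : Fin N) :
    A.adjugate j j = subdet A ({j}ᶜ) := by
  classical
  rw [Matrix.adjugate_apply]
  set B := A.updateRow j (Pi.single j 1) with hB
  set e : {x : Fin N // x = j} ⊕ {x : Fin N // ¬ x = j} ≃ Fin N := Equiv.sumCompl _ with he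
  rw [← Matrix.det_submatrix_equiv_self e B]
  set D' : Matrix {x : Fin N // ¬ x = j} {x : Fin N // ¬ x = j} ℝ :=
    B.submatrix Subtype.val Subtype.val with hD'
  have hblock : B.submatrix e e =
      Matrix.fromBlocks 1 0 (Matrix.of fun x _ => B x.val j) D' := by
    ext i k
    cases i with
    | inl i =>
      cases k with
      | inl k =>
        have : i = k := Subsingleton.elim _ _
        subst this
        simp [he, i.prop, Matrix.one_apply, B, Pi.single_apply]
      | inr k =>
        simp [he, i.prop, B, Pi.single_apply, k.prop, Ne.symm]
    | inr i =>
      cases k with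
      | inl k => simp [he, k.prop, D']
      | inr k => simp [he, D']
  rw [hblock, Matrix.det_fromBlocks_zero₁₂, Matrix.det_one, one_mul]
  set ε : {x : Fin N // ¬ x = j} ≃ {x : Fin N // x ∈ ({j}ᶜ : Finset (Fin N))} :=
    Equiv.subtypeEquivRight (by simp) with hε
  have : D' = (A.submatrix (fun x : ({j}ᶜ : Finset (Fin N)) => (x : Fin N))
      (fun x : ({j}ᶜ : Finset (Fin N)) => (x : Fin N))).submatrix ε ε := by
    ext i k
    simp [D', B, hε, Matrix.updateRow_ne i.prop]
  rw [this, Matrix.det_submatrix_equiv_self]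
  rfl

lemma pow_entry_nonneg {N : ℕ} (P : Matrix (Fin N) (Fin N) ℝ)
    (hnn : ∀ i j, 0 ≤ P i j) : ∀ n i j, 0 ≤ (P ^ n) i j := by
  intro n
  induction n with
  | zero => intro i j; by_cases h : i = j <;> simp [Matrix.one_apply, h]
  | succ n ih =>
    intro i j; rw [pow_succ, Matrix.mul_apply]
    exact Finset.sum_nonneg fun m _ => mul_nonneg (ih i m) (hnn m j)

lemma closed_set {N : ℕ} (P : Matrix (Fin N) (Fin N) ℝ)
    (hnn : ∀ i j, 0 ≤ P i j) (S : Set (Fin N))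
    (hS : ∀ i ∈ S, ∀ k, 0 < P i k → k ∈ S) (i0 : Fin N) (h0 : i0 ∈ S) :
    ∀ n k, 0 < (P ^ n) i0 k → k ∈ S := by
  intro n
  induction n with
  | zero =>
    intro k hk
    simp only [pow_zero, Matrix.one_apply] at hk
    by_cases h : i0 = k
    · exact h ▸ h0
    · simp [h] at hk
  | succ n ih =>
    intro k hk
    rw [pow_succ, Matrix.mul_apply] at hk
    obtain ⟨m, -, hm⟩ := Finset.exists_lt_of_sum_lt (by simpa using hk :
      ∑ m : Fin N, (0:ℝ) < ∑ m, (P ^ n) i0 m * P m k)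
    have h1 : 0 < (P ^ n) i0 m := by
      rcases lt_or_eq_of_le (pow_entry_nonneg P hnn n i0 m) with h | h
      · exact h
      · rw [← h] at hm; simp at hm
    have h2 : 0 < P m k := by
      nlinarith [pow_entry_nonneg P hnn n i0 m, hnn m k]
    exact hS m (ih m h1) k h2

lemma harmonic_const {N : ℕ} (hN : 0 < N) (P : Matrix (Fin N) (Fin N) ℝ)
    (hnn : ∀ i j, 0 ≤ P i j) (hrow : ∀ i, ∑ j, P i j = 1)
    (hirr : ∀ i j, ∃ n, 1 ≤ n ∧ 0 < (P ^ n) i j)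
    (x : Fin N → ℝ) (hx : ∀ i, ∑ j, P i j * x j = x i) :
    ∀ i k, x i = x k := by
  obtain ⟨i0, -, hi0⟩ := Finset.exists_max_image Finset.univ x ⟨⟨0, hN⟩, Finset.mem_univ _⟩
  have key : ∀ k, x k = x i0 := by
    set S : Set (Fin N) := {k | x k = x i0} with hSdef
    have hS : ∀ i ∈ S, ∀ k, 0 < P i k → k ∈ S := by
      intro i hi k hk
      by_contra hne
      have hlt : x k < x i0 := lt_of_le_of_ne (hi0 k (Finset.mem_univ k)) hne
      have : ∑ j, P i j * x j < ∑ j, P i j * x i0 := by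
        apply Finset.sum_lt_sum
        · intro j _; exact mul_le_mul_of_nonneg_left (hi0 j (Finset.mem_univ j)) (hnn i j)
        · exact ⟨k, Finset.mem_univ k, mul_lt_mul_of_pos_left hlt hk⟩
      rw [hx i, ← Finset.sum_mul, hrow i, one_mul] at this
      have hii : x i = x i0 := hi
      linarith
    intro k
    obtain ⟨n, -, hn⟩ := hirr i0 k
    exact closed_set P hnn S hS i0 rfl n k hn
  intro i k; rw [key i, key k]

lemma subdet_pos {N : ℕ} (P : Matrix (Fin N) (Fin N) ℝ)
    (hnn : ∀ i j, 0 ≤ P i j) (hrow : ∀ i, ∑ j, P i j = 1)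
    (hirr : ∀ i j, ∃ n, 1 ≤ n ∧ 0 < (P ^ n) i j) (j : Fin N) :
    0 < subdet (1 - P) ({j}ᶜ) := by
  classical
  set H := ({j}ᶜ : Finset (Fin N)) with hHdef
  set ι : H → Fin N := fun x => (x : Fin N) with hι
  have hinj : Function.Injective ι := Subtype.val_injective
  set Q : Matrix H H ℝ := P.submatrix ι ι with hQ
  have hsub : subdet (1 - P) H = ((1 : Matrix H H ℝ) - Q).det := by
    unfold subdet
    congr 1
    ext i k
    by_cases h : i = k <;>
      simp [Matrix.one_apply, Subtype.ext_iff, h, Q, hι, Subtype.val_injective.ne_iff,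
        (Subtype.ext_iff.not.mpr)]
  set f : ℝ → ℝ := fun t => ((1 : Matrix H H ℝ) - t • Q).det with hf
  have hf0 : f 0 = 1 := by simp [hf]
  have hcont : Continuous f := by
    apply Continuous.matrix_det
    exact continuous_const.sub (continuous_id.smul continuous_const)
  have hQnn : ∀ i k : H, 0 ≤ Q i k := fun i k => hnn i k
  have hQsum : ∀ i : H, ∑ k : H, Q i k ≤ 1 := by
    intro i
    have h1 : ∑ k : H, Q i k = ∑ k ∈ H, P (i : Fin N) k := by
      rw [← Finset.sum_coe_sort H (fun k => P (i : Fin N) k)]; rfl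
    rw [h1, ← hrow (i : Fin N)]
    exact Finset.sum_le_sum_of_subset_of_nonneg (Finset.subset_univ H)
      (fun k _ _ => hnn _ k)
  have hPijzero : ∀ i : H, ∑ k : H, Q i k = 1 → P (i : Fin N) j = 0 := by
    intro i hB
    have h1 : ∑ k : H, Q i k = ∑ k ∈ H, P (i : Fin N) k := by
      rw [← Finset.sum_coe_sort H (fun k => P (i : Fin N) k)]; rfl
    have h2 : ∑ k ∈ H, P (i : Fin N) k + ∑ k ∈ Hᶜ, P (i : Fin N) k = 1 := by
      rw [Finset.sum_add_sum_compl]; exact hrow _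
    have h3 : (Hᶜ : Finset (Fin N)) = {j} := by rw [hHdef, compl_compl]
    rw [h1] at hB
    rw [h3, Finset.sum_singleton, hB] at h2
    linarith
  have hne : ∀ t ∈ Set.Icc (0:ℝ) 1, f t ≠ 0 := by
    rintro t ⟨ht0, ht1⟩ hdet
    obtain ⟨x, hx0, hxe⟩ := Matrix.exists_mulVec_eq_zero_iff.mpr hdet
    have hxeq : ∀ i : H, x i = t * ∑ k : H, Q i k * x k := by
      intro i
      have h := congrFun hxe i
      rw [Matrix.sub_mulVec, Matrix.smul_mulVec, Matrix.one_mulVec] at h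
      have h2 : x i - t * (∑ k : H, Q i k * x k) = 0 := by
        simpa [Matrix.mulVec, dotProduct] using h
      linarith
    rcases isEmpty_or_nonempty H with hH | hH
    · exact hx0 (funext fun a => (hH.false a).elim)
    obtain ⟨i0, -, hi0⟩ := Finset.exists_max_image Finset.univ (fun i : H => |x i|)
      ⟨Classical.arbitrary H, Finset.mem_univ _⟩
    set y : H → ℝ := if 0 ≤ x i0 then x else -x with hy
    have hyabs : ∀ k, |y k| = |x k| := by
      intro k; by_cases h : 0 ≤ x i0 <;> simp [hy, h]
    have hyeq : ∀ i : H, y i = t * ∑ k : H, Q i k * y k := by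
      intro i
      by_cases h : 0 ≤ x i0
      · simpa [hy, h] using hxeq i
      · simp only [hy, if_neg h, Pi.neg_apply, mul_neg, Finset.sum_neg_distrib, neg_inj]
        exact hxeq i
    set M : ℝ := y i0 with hM
    have hMabs : M = |x i0| := by
      by_cases h : 0 ≤ x i0
      · simp only [hM, hy, if_pos h]; exact (abs_of_nonneg h).symm
      · push_neg at h
        simp only [hM, hy, if_neg (not_le.mpr h), Pi.neg_apply]
        exact (abs_of_neg h).symm
    have hMpos : 0 < M := by
      rw [hMabs]
      obtain ⟨k, hk⟩ := Function.ne_iff.mp hx0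
      exact lt_of_lt_of_le (abs_pos.mpr hk) (hi0 k (Finset.mem_univ k))
    have hyM : ∀ k, y k ≤ M := by
      intro k
      rw [hMabs]
      calc y k ≤ |y k| := le_abs_self _
        _ = |x k| := hyabs k
        _ ≤ |x i0| := hi0 k (Finset.mem_univ k)
    have hA : ∀ i : H, (∑ k : H, Q i k * y k) ≤ (∑ k : H, Q i k) * M := by
      intro i
      rw [Finset.sum_mul]
      exact Finset.sum_le_sum fun k _ => mul_le_mul_of_nonneg_left (hyM k) (hQnn i k)
    have ht1' : t = 1 := by
      have h1 : M = t * ∑ k : H, Q i0 k * y k := hyeq i0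
      have h2 := hA i0
      have h3 := hQsum i0
      have h4 : 0 ≤ ∑ k : H, Q i0 k := Finset.sum_nonneg fun k _ => hQnn i0 k
      by_contra hne1
      have htlt : t < 1 := lt_of_le_of_ne ht1 hne1
      nlinarith [mul_le_mul_of_nonneg_left h2 ht0, mul_le_mul_of_nonneg_right h3 hMpos.le,
        mul_lt_mul_of_pos_right htlt hMpos, mul_nonneg ht0 (sub_nonneg.mpr
          (mul_le_mul_of_nonneg_right h3 hMpos.le))]
    subst ht1'
    set S : Set (Fin N) := {i | ∃ h : i ∈ H, y ⟨i, h⟩ = M} with hS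
    have hi0S : (i0 : Fin N) ∈ S := ⟨i0.prop, by rw [Subtype.coe_eta]⟩
    have hclosed : ∀ i ∈ S, ∀ k, 0 < P i k → k ∈ S := by
      rintro i ⟨hiH, hyi⟩ k hPik
      set i' : H := ⟨i, hiH⟩ with hi'
      have h1 : M = ∑ k : H, Q i' k * y k := by
        have h := hyeq i'
        rw [one_mul] at h
        rw [← h]; exact hyi.symm
      have hB1 : (∑ k : H, Q i' k) = 1 := by
        have h2 := hA i'
        have h3 := hQsum i'
        have h4 : 1 ≤ ∑ k : H, Q i' k := by nlinarith
        linarith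
      have hterm : ∀ k : H, Q i' k * (M - y k) = 0 := by
        have hsum0 : ∑ k : H, Q i' k * (M - y k) = 0 := by
          have he : ∑ k : H, Q i' k * (M - y k)
              = (∑ k : H, Q i' k) * M - ∑ k : H, Q i' k * y k := by
            rw [Finset.sum_mul, ← Finset.sum_sub_distrib]
            exact Finset.sum_congr rfl fun k _ => by ring
          rw [he, hB1, one_mul, ← h1, sub_self]
        intro k
        exact (Finset.sum_eq_zero_iff_of_nonneg (fun k _ =>
          mul_nonneg (hQnn i' k) (sub_nonneg.mpr (hyM k)))).mp hsum0 k (Finset.mem_univ k)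
      have hkH : k ∈ H := by
        by_contra hkH
        have hkj : k = j := by
          simpa [hHdef] using hkH
        rw [hkj] at hPik
        exact absurd (hPijzero i' hB1) (ne_of_gt hPik)
      refine ⟨hkH, ?_⟩
      have hQpos : 0 < Q i' ⟨k, hkH⟩ := hPik
      rcases mul_eq_zero.mp (hterm ⟨k, hkH⟩) with h | h
      · exact absurd h (ne_of_gt hQpos)
      · linarith [sub_eq_zero.mp h]
    obtain ⟨n, -, hn⟩ := hirr (i0 : Fin N) j
    obtain ⟨hjH, -⟩ := closed_set P hnn S hclosed (i0 : Fin N) hi0S n j hn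
    simp [hHdef] at hjH
  have h1pos : 0 < f 1 := by
    rcases lt_trichotomy (f 1) 0 with h | h | h
    · obtain ⟨c, hc, hfc⟩ := intermediate_value_Icc' zero_le_one hcont.continuousOn
        (Set.mem_Icc.mpr ⟨le_of_lt h, by rw [hf0]; exact zero_le_one⟩)
      exact absurd hfc (hne c hc)
    · exact absurd h (hne 1 (Set.mem_Icc.mpr ⟨zero_le_one, le_refl 1⟩))
    · exact h
  have hf1 : f 1 = subdet (1 - P) H := by rw [hsub]; simp [hf]
  exact hf1 ▸ h1pos

/-- **Determinant formula for the invariant distribution.**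
Let `P` be an irreducible stochastic matrix on the finite state space `Fin N` and set
`D = 1 − P`.  Then `π j = D({j}ᶜ) / ∑_k D({k}ᶜ)` defines the unique invariant
probability distribution of `P`; in particular `∑_k D({k}ᶜ) > 0` and each
`D({j}ᶜ) ≥ 0`. -/
theorem invariant_distribution_determinant_formula
    {N : ℕ} (hN : 0 < N) (P : Matrix (Fin N) (Fin N) ℝ)
    (hnn : ∀ i j, 0 ≤ P i j) (hrow : ∀ i, ∑ j, P i j = 1)
    (hirr : ∀ i j, ∃ n, 1 ≤ n ∧ 0 < (P ^ n) i j) :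
    0 < (∑ k, subdet (1 - P) ({k}ᶜ)) ∧
    (∀ j, 0 ≤ subdet (1 - P) ({j}ᶜ)) ∧
    (∀ j, 0 ≤ subdet (1 - P) ({j}ᶜ) / ∑ k, subdet (1 - P) ({k}ᶜ)) ∧
    (∑ j, subdet (1 - P) ({j}ᶜ) / ∑ k, subdet (1 - P) ({k}ᶜ)) = 1 ∧
    (∀ j, ∑ i, (subdet (1 - P) ({i}ᶜ) / ∑ k, subdet (1 - P) ({k}ᶜ)) * P i j
        = subdet (1 - P) ({j}ᶜ) / ∑ k, subdet (1 - P) ({k}ᶜ)) ∧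
    (∀ ρ : Fin N → ℝ, (∀ j, 0 ≤ ρ j) → (∑ j, ρ j = 1) →
      (∀ j, ∑ i, ρ i * P i j = ρ j) →
      ∀ j, ρ j = subdet (1 - P) ({j}ᶜ) / ∑ k, subdet (1 - P) ({k}ᶜ)) := by
  classical
  set D := (1 : Matrix (Fin N) (Fin N) ℝ) - P with hD
  set v : Fin N → ℝ := fun j => subdet D ({j}ᶜ) with hv
  have hvpos : ∀ j, 0 < v j := fun j => subdet_pos P hnn hrow hirr j
  set T : ℝ := ∑ k, v k with hT'
  have hT : 0 < T := Finset.sum_pos (fun k _ => hvpos k) ⟨⟨0, hN⟩, Finset.mem_univ _⟩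
  have i00 : Fin N := ⟨0, hN⟩
  -- D annihilates constants
  have hD1 : D *ᵥ (fun _ => (1:ℝ)) = 0 := by
    funext i
    have h1 : (D *ᵥ fun _ => (1:ℝ)) i = ∑ x, ((1 : Matrix (Fin N) (Fin N) ℝ) i x - P i x) := by
      simp [Matrix.mulVec, dotProduct, hD, Matrix.sub_apply]
    rw [h1, Finset.sum_sub_distrib, hrow i]
    simp [Matrix.one_apply]
  have hdet0 : D.det = 0 :=
    Matrix.exists_mulVec_eq_zero_iff.mp
      ⟨fun _ => 1, fun h => one_ne_zero (congrFun h ⟨0, hN⟩), hD1⟩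
  have hker : ∀ x : Fin N → ℝ, D *ᵥ x = 0 → ∀ i k, x i = x k := by
    intro x hx
    apply harmonic_const hN P hnn hrow hirr
    intro i
    have h := congrFun hx i
    rw [hD, Matrix.sub_mulVec, Matrix.one_mulVec] at h
    have h2 : x i - ∑ j, P i j * x j = 0 := by
      simpa [Matrix.mulVec, dotProduct] using h
    linarith
  -- columns of the adjugate are constant
  have hadjcol : ∀ i k l : Fin N, D.adjugate i l = D.adjugate k l := by
    intro i k l
    have hcol : D *ᵥ (fun m => D.adjugate m l) = 0 := by
      funext m
      have h := congrFun (congrFun (Matrix.mul_adjugate D) m) l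
      rw [hdet0] at h
      simpa [Matrix.mul_apply, Matrix.mulVec, dotProduct] using h
    exact hker _ hcol i k
  -- v is a left null vector of D
  have hvD : ∀ l, ∑ i, v i * D i l = 0 := by
    intro l
    have h := congrFun (congrFun (Matrix.adjugate_mul D) l) l
    rw [hdet0] at h
    calc ∑ i, v i * D i l = ∑ i, D.adjugate l i * D i l := by
          refine Finset.sum_congr rfl fun i _ => ?_
          rw [hadjcol l i i, adjugate_diag]
      _ = 0 := by simpa [Matrix.mul_apply] using h
  -- translation between left-invariance and left null vectors
  have hone : ∀ (w : Fin N → ℝ) l, ∑ i, w i * (1 : Matrix (Fin N) (Fin N) ℝ) i l = w l := by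
    intro w l
    simp [Matrix.one_apply, mul_ite, Finset.sum_ite_eq']
  have hDsplit : ∀ (w : Fin N → ℝ) l,
      ∑ i, w i * D i l = w l - ∑ i, w i * P i l := by
    intro w l
    calc ∑ i, w i * D i l
        = ∑ i, (w i * (1 : Matrix (Fin N) (Fin N) ℝ) i l - w i * P i l) := by
          refine Finset.sum_congr rfl fun i _ => ?_
          rw [hD]; simp [Matrix.sub_apply]; ring
      _ = w l - ∑ i, w i * P i l := by rw [Finset.sum_sub_distrib, hone]
  have hinv : ∀ l, ∑ i, v i * P i l = v l := by
    intro l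
    have := hvD l
    rw [hDsplit] at this
    linarith
  have hinvdiv : ∀ l, ∑ i, v i / T * P i l = v l / T := by
    intro l
    rw [← hinv l, Finset.sum_div]
    exact Finset.sum_congr rfl fun i _ => by ring
  have hsumdiv : ∑ j, v j / T = 1 := by
    rw [← Finset.sum_div, ← hT', div_self (ne_of_gt hT)]
  -- rank computation
  have hfinrankpi : Module.finrank ℝ (Fin N → ℝ) = N := by simp
  have hkerD : LinearMap.ker D.mulVecLin = Submodule.span ℝ {fun _ => (1:ℝ)} := by
    apply le_antisymm
    · intro x hx
      have hx' : D *ᵥ x = 0 := hx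
      have hc := hker x hx'
      rw [Submodule.mem_span_singleton]
      exact ⟨x ⟨0, hN⟩, by funext i; simpa using (hc i ⟨0, hN⟩).symm⟩
    · rw [Submodule.span_le, Set.singleton_subset_iff]
      exact hD1
  have hrank1 : Module.finrank ℝ (LinearMap.ker D.mulVecLin) = 1 := by
    rw [hkerD]
    exact finrank_span_singleton (fun h => one_ne_zero (congrFun h ⟨0, hN⟩))
  have h2 : Matrix.rank D + Module.finrank ℝ (LinearMap.ker D.mulVecLin) = N := by
    have h := LinearMap.finrank_range_add_finrank_ker D.mulVecLin
    rw [hfinrankpi] at h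
    exact h
  have h3 : Matrix.rank Dᵀ + Module.finrank ℝ (LinearMap.ker (Dᵀ).mulVecLin) = N := by
    have h := LinearMap.finrank_range_add_finrank_ker (Dᵀ).mulVecLin
    rw [hfinrankpi] at h
    exact h
  have h4 : Matrix.rank Dᵀ = Matrix.rank D := Matrix.rank_transpose D
  have hrankT : Module.finrank ℝ (LinearMap.ker (Dᵀ).mulVecLin) = 1 := by omega
  have hvne : v ≠ 0 := fun h => absurd (hvpos ⟨0, hN⟩) (by rw [congrFun h ⟨0, hN⟩]; simp)
  have hmemker : ∀ w : Fin N → ℝ, (∀ l, ∑ i, w i * D i l = 0) →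
      w ∈ LinearMap.ker (Dᵀ).mulVecLin := by
    intro w hw
    rw [LinearMap.mem_ker]
    funext l
    have : (Dᵀ *ᵥ w) l = ∑ i, w i * D i l := by
      simp [Matrix.mulVec, dotProduct, Matrix.transpose_apply, mul_comm]
    exact this.trans (hw l)
  have hspan : LinearMap.ker (Dᵀ).mulVecLin = Submodule.span ℝ {v} := by
    symm
    apply Submodule.eq_of_le_of_finrank_eq
    · rw [Submodule.span_le, Set.singleton_subset_iff]
      exact hmemker v hvD
    · rw [finrank_span_singleton hvne, hrankT]
  refine ⟨hT, fun j => (hvpos j).le, fun j => div_nonneg (hvpos j).le hT.le, hsumdiv,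
    hinvdiv, ?_⟩
  intro ρ hρnn hρsum hρinv j
  have hwD : ∀ l, ∑ i, (ρ i - v i / T) * D i l = 0 := by
    intro l
    have e1 : ∑ i, ρ i * D i l = 0 := by rw [hDsplit, hρinv]; ring
    have e2 : ∑ i, (v i / T) * D i l = 0 := by rw [hDsplit, hinvdiv]; ring
    calc ∑ i, (ρ i - v i / T) * D i l
        = ∑ i, (ρ i * D i l - (v i / T) * D i l) := by
          exact Finset.sum_congr rfl fun i _ => by ring
      _ = 0 := by rw [Finset.sum_sub_distrib, e1, e2, sub_self]
  have hwmem : (fun i => ρ i - v i / T) ∈ LinearMap.ker (Dᵀ).mulVecLin :=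
    hmemker _ hwD
  rw [hspan, Submodule.mem_span_singleton] at hwmem
  obtain ⟨a, ha⟩ := hwmem
  have hsum0 : ∑ l, (ρ l - v l / T) = 0 := by
    rw [Finset.sum_sub_distrib, hρsum, hsumdiv, sub_self]
  have haT : a * T = 0 := by
    have h := congrArg (fun w => ∑ l, w l) ha
    simp only [Pi.smul_apply, smul_eq_mul] at h
    rw [← Finset.mul_sum, ← hT'] at h
    rw [hsum0] at h
    exact h
  have ha0 : a = 0 := by
    rcases mul_eq_zero.mp haT with h | h
    · exact h
    · exact absurd h (ne_of_gt hT)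
  have := congrFun ha j
  rw [ha0] at this
  simp at this
  linarith
end

section
/- Fix N ≥ 1, a real matrix T = (T_{ij})_{1≤i,j≤N}, thresholds U_1, …, U_N ∈ ℝ, and β > 0. Let p_{ση} = ∏_{i=1}^N exp(β η_i h_i(σ)) / (exp(β h_i(σ)) + exp(−β h_i(σ))) on {−1,1}^N, where h_i(σ) = Σ_{j=1}^N T_{ij} σ_j − U_i. Then for any three states α, σ, η ∈ {−1,1}^N: (p_{ασ} p_{ση} p_{ηα}) / (p_{αη} p_{ησ} p_{σα}) = exp( −β Σ_{i,j} (T_{ij} − T_{ji}) (α_i σ_j + σ_i η_j + η_i α_j) ). -/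
/-- The local field `h_i(σ) = ∑_j T_{ij} σ_j − U_i` of the Boltzmann machine. -/
def localField {N : ℕ} (T : Fin N → Fin N → ℝ) (U : Fin N → ℝ)
    (σ : Fin N → ℝ) (i : Fin N) : ℝ :=
  ∑ j, T i j * σ j - U i

/-- The synchronous Boltzmann-machine transition probability at inverse temperature `β`:
`p_{ση} = ∏_i exp(β η_i h_i(σ)) / (exp(β h_i(σ)) + exp(−β h_i(σ)))`. -/
noncomputable def bmP {N : ℕ} (T : Fin N → Fin N → ℝ) (U : Fin N → ℝ) (β : ℝ)
    (σ η : Fin N → ℝ) : ℝ :=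
  ∏ i, Real.exp (β * η i * localField T U σ i) /
    (Real.exp (β * localField T U σ i) + Real.exp (-(β * localField T U σ i)))

/-- **Triangle-cycle ratio for the synchronous Boltzmann machine.**
For any three states `α, σ, η ∈ {−1,1}^N`,
`(p_{ασ} p_{ση} p_{ηα}) / (p_{αη} p_{ησ} p_{σα})
  = exp(−β ∑_{i,j} (T_{ij} − T_{ji})(α_i σ_j + σ_i η_j + η_i α_j))`. -/
theorem bmP_triangle_ratio
    {N : ℕ} (hN : 1 ≤ N) (T : Fin N → Fin N → ℝ) (U : Fin N → ℝ)
    (β : ℝ) (hβ : 0 < β) (α σ η : Fin N → ℝ)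
    (hα : ∀ i, α i = 1 ∨ α i = -1)
    (hσ : ∀ i, σ i = 1 ∨ σ i = -1)
    (hη : ∀ i, η i = 1 ∨ η i = -1) :
    (bmP T U β α σ * bmP T U β σ η * bmP T U β η α) /
      (bmP T U β α η * bmP T U β η σ * bmP T U β σ α)
    = Real.exp (-β * ∑ i, ∑ j,
        (T i j - T j i) * (α i * σ j + σ i * η j + η i * α j)) := by
  -- notation for exponents and normalizers
  set S : (Fin N → ℝ) → (Fin N → ℝ) → ℝ :=
    fun a b => ∑ i, β * b i * localField T U a i with hS
  set Z : (Fin N → ℝ) → ℝ :=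
    fun a => ∏ i, (Real.exp (β * localField T U a i) +
      Real.exp (-(β * localField T U a i))) with hZdef
  have hZpos : ∀ a, 0 < Z a := by
    intro a
    exact Finset.prod_pos fun i _ => by positivity
  have hb : ∀ a b : Fin N → ℝ, bmP T U β a b = Real.exp (S a b) / Z a := by
    intro a b
    unfold bmP
    rw [hS, hZdef]
    rw [Finset.prod_div_distrib, Real.exp_sum]
  rw [hb, hb, hb, hb, hb, hb]
  have hstep : (Real.exp (S α σ) / Z α * (Real.exp (S σ η) / Z σ) *
      (Real.exp (S η α) / Z η)) /
      (Real.exp (S α η) / Z α * (Real.exp (S η σ) / Z η) *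
      (Real.exp (S σ α) / Z σ))
      = Real.exp (S α σ + S σ η + S η α - (S α η + S η σ + S σ α)) := by
    rw [Real.exp_sub, Real.exp_add, Real.exp_add, Real.exp_add, Real.exp_add]
    have h1 := (hZpos α).ne'
    have h2 := (hZpos σ).ne'
    have h3 := (hZpos η).ne'
    have e1 := (Real.exp_pos (S α η)).ne'
    have e2 := (Real.exp_pos (S η σ)).ne'
    have e3 := (Real.exp_pos (S σ α)).ne'
    field_simp
  rw [hstep]
  congr 1
  -- now a pure algebraic identity on sums
  have hU : ∀ a b : Fin N → ℝ,
      S a b = β * (∑ i, ∑ j, T i j * (b i * a j)) - β * ∑ i, b i * U i := by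
    intro a b
    simp only [hS, localField, mul_sub, Finset.mul_sum, Finset.sum_sub_distrib]
    congr 1
    · apply Finset.sum_congr rfl
      intro i _
      apply Finset.sum_congr rfl
      intro j _
      ring
    · apply Finset.sum_congr rfl
      intro i _
      ring
  rw [hU, hU, hU, hU, hU, hU]
  have hswap : (∑ i, ∑ j, T i j * (α j * σ i + σ j * η i + η j * α i))
      = ∑ i, ∑ j, T j i * (α i * σ j + σ i * η j + η i * α j) := by
    rw [Finset.sum_comm]
  have hc : ∑ i, ∑ j, (T i j - T j i) * (α i * σ j + σ i * η j + η i * α j)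
      = (∑ i, ∑ j, T i j * (α i * σ j + σ i * η j + η i * α j))
        - ∑ i, ∑ j, T i j * (α j * σ i + σ j * η i + η j * α i) := by
    rw [hswap]
    simp only [← Finset.sum_sub_distrib]
    apply Finset.sum_congr rfl
    intro i _
    apply Finset.sum_congr rfl
    intro j _
    ring
  rw [hc]
  have hcomm : ∀ a b : Fin N → ℝ,
      (∑ i, ∑ j, T i j * (a j * b i)) = ∑ i, ∑ j, T i j * (b i * a j) := by
    intro a b
    apply Finset.sum_congr rfl
    intro i _
    apply Finset.sum_congr rfl
    intro j _
    ring
  have hsplit : (∑ i, ∑ j, T i j * (α i * σ j + σ i * η j + η i * α j))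
      = (∑ i, ∑ j, T i j * (α i * σ j)) + (∑ i, ∑ j, T i j * (σ i * η j))
        + (∑ i, ∑ j, T i j * (η i * α j)) := by
    simp only [← Finset.sum_add_distrib]
    apply Finset.sum_congr rfl
    intro i _
    apply Finset.sum_congr rfl
    intro j _
    ring
  have hsplit2 : (∑ i, ∑ j, T i j * (α j * σ i + σ j * η i + η j * α i))
      = (∑ i, ∑ j, T i j * (σ i * α j)) + (∑ i, ∑ j, T i j * (η i * σ j))
        + (∑ i, ∑ j, T i j * (α i * η j)) := by
    simp only [← Finset.sum_add_distrib]
    apply Finset.sum_congr rfl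
    intro i _
    apply Finset.sum_congr rfl
    intro j _
    ring
  rw [hsplit, hsplit2]
  ring
end

section
/- Fix N ≥ 1, a real matrix T = (T_{ij})_{1≤i,j≤N}, thresholds U_1, …, U_N ∈ ℝ, and β > 0. Let p_{ση} = ∏_{i=1}^N exp(β η_i h_i(σ)) / (exp(β h_i(σ)) + exp(−β h_i(σ))) on {−1,1}^N, where h_i(σ) = Σ_{j=1}^N T_{ij} σ_j − U_i. Then the transition matrix (p_{ση}) satisfies the Kolmogorov cyclic condition — i.e., for every finite sequence of states σ^(1), …, σ^(s) in {−1,1}^N, p_{σ^(1)σ^(2)} p_{σ^(2)σ^(3)} ⋯ p_{σ^(s)σ^(1)} = p_{σ^(1)σ^(s)} p_{σ^(s)σ^(s-1)} ⋯ p_{σ^(2)σ^(1)} — if and only if T is symmetric (T_{ij} = T_{ji} for all i, j). Equivalently, the stationary Markov chain with this transition matrix is reversible if and only if T is symmetric. -/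
namespace BMaux

/-- The bilinear pairing `ηᵀ T σ`. -/
def Qb {N : ℕ} (T : Fin N → Fin N → ℝ) (x y : Fin N → ℝ) : ℝ :=
  ∑ i, ∑ j, x i * (T i j * y j)

/-- Denominator product. -/
noncomputable def Zden {N : ℕ} (T : Fin N → Fin N → ℝ) (U : Fin N → ℝ) (β : ℝ)
    (σ : Fin N → ℝ) : ℝ :=
  ∏ i, (Real.exp (β * localField T U σ i) + Real.exp (-(β * localField T U σ i)))

lemma Zden_pos {N : ℕ} (T : Fin N → Fin N → ℝ) (U : Fin N → ℝ) (β : ℝ)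
    (σ : Fin N → ℝ) : 0 < Zden T U β σ :=
  Finset.prod_pos fun i _ => by positivity

lemma sum_update_mul {N : ℕ} (x g : Fin N → ℝ) (k : Fin N) (a : ℝ) :
    ∑ m, Function.update x k a m * g m = (∑ m, x m * g m) + (a - x k) * g k := by
  have h : ∀ m, Function.update x k a m * g m
      = x m * g m + (if m = k then (a - x k) * g k else 0) := by
    intro m
    rcases eq_or_ne m k with rfl | hm
    · simp only [Function.update_self, eq_self_iff_true, if_true]; ring
    · rw [Function.update_of_ne hm, if_neg hm]; ring
  simp only [h, Finset.sum_add_distrib, Finset.sum_ite_eq', Finset.mem_univ, if_true]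

lemma mul_sum_update {N : ℕ} (g x : Fin N → ℝ) (k : Fin N) (a : ℝ) :
    ∑ m, g m * Function.update x k a m = (∑ m, g m * x m) + g k * (a - x k) := by
  have h : ∀ m, g m * Function.update x k a m
      = g m * x m + (if m = k then g k * (a - x k) else 0) := by
    intro m
    rcases eq_or_ne m k with rfl | hm
    · simp only [Function.update_self, eq_self_iff_true, if_true]; ring
    · rw [Function.update_of_ne hm, if_neg hm]; ring
  simp only [h, Finset.sum_add_distrib, Finset.sum_ite_eq', Finset.mem_univ, if_true]

lemma Qb_eq_sum_mul {N : ℕ} (T : Fin N → Fin N → ℝ) (x y : Fin N → ℝ) :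
    Qb T x y = ∑ i, x i * ∑ j, T i j * y j := by
  unfold Qb
  exact Finset.sum_congr rfl fun i _ => (Finset.mul_sum _ _ _).symm

lemma Qb_eq_sum_mul' {N : ℕ} (T : Fin N → Fin N → ℝ) (x y : Fin N → ℝ) :
    Qb T x y = ∑ j, (∑ i, x i * T i j) * y j := by
  unfold Qb
  rw [Finset.sum_comm]
  refine Finset.sum_congr rfl fun j _ => ?_
  rw [Finset.sum_mul]
  exact Finset.sum_congr rfl fun i _ => by ring

lemma Qb_update_left {N : ℕ} (T : Fin N → Fin N → ℝ) (x y : Fin N → ℝ)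
    (k : Fin N) (a : ℝ) :
    Qb T (Function.update x k a) y = Qb T x y + (a - x k) * ∑ m, T k m * y m := by
  rw [Qb_eq_sum_mul, Qb_eq_sum_mul,
    sum_update_mul x (fun i => ∑ j, T i j * y j) k a]

lemma Qb_update_right {N : ℕ} (T : Fin N → Fin N → ℝ) (x y : Fin N → ℝ)
    (k : Fin N) (a : ℝ) :
    Qb T x (Function.update y k a) = Qb T x y + (∑ m, x m * T m k) * (a - y k) := by
  rw [Qb_eq_sum_mul', Qb_eq_sum_mul',
    mul_sum_update (fun j => ∑ i, x i * T i j) y k a]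

lemma bmP_eq {N : ℕ} (T : Fin N → Fin N → ℝ) (U : Fin N → ℝ) (β : ℝ)
    (σ η : Fin N → ℝ) :
    bmP T U β σ η = Real.exp (β * (Qb T η σ - ∑ i, η i * U i)) / Zden T U β σ := by
  unfold bmP Zden
  rw [Finset.prod_div_distrib, ← Real.exp_sum]
  congr 2
  rw [mul_sub, Qb_eq_sum_mul, Finset.mul_sum, Finset.mul_sum, ← Finset.sum_sub_distrib]
  refine Finset.sum_congr rfl fun i _ => ?_
  rw [localField]
  ring

lemma prod_bmP {N m : ℕ} (T : Fin N → Fin N → ℝ) (U : Fin N → ℝ) (β : ℝ)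
    (F G : Fin m → Fin N → ℝ) :
    ∏ l, bmP T U β (F l) (G l)
      = Real.exp (∑ l, β * (Qb T (G l) (F l) - ∑ i, G l i * U i)) /
        ∏ l, Zden T U β (F l) := by
  simp only [bmP_eq]
  rw [Finset.prod_div_distrib, ← Real.exp_sum]

lemma cycle_iff {N : ℕ} (T : Fin N → Fin N → ℝ) (U : Fin N → ℝ) (β : ℝ)
    (hβ : 0 < β) {s : ℕ} (f : Fin (s + 1) → Fin N → ℝ) :
    (∏ l, bmP T U β (f l) (f (l + 1)) = ∏ l, bmP T U β (f (l + 1)) (f l)) ↔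
    (∑ l, Qb T (f (l + 1)) (f l) = ∑ l, Qb T (f l) (f (l + 1))) := by
  have hU : ∑ l, ∑ i, f (l + 1) i * U i = ∑ l, ∑ i, f l i * U i :=
    Fintype.sum_equiv (Equiv.addRight 1) _ _ fun l => rfl
  have hZ : ∏ l, Zden T U β (f (l + 1)) = ∏ l, Zden T U β (f l) :=
    Fintype.prod_equiv (Equiv.addRight 1) _ _ fun l => rfl
  have hP : (0:ℝ) < ∏ l, Zden T U β (f l) :=
    Finset.prod_pos fun l _ => Zden_pos T U β (f l)
  rw [prod_bmP T U β f (fun l => f (l + 1)), prod_bmP T U β (fun l => f (l + 1)) f,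
    hZ]
  simp only [← Finset.mul_sum, Finset.sum_sub_distrib]
  rw [hU]
  constructor
  · intro h
    rw [div_eq_div_iff hP.ne' hP.ne'] at h
    have h3 := mul_right_cancel₀ hP.ne' h
    rw [Real.exp_eq_exp] at h3
    have h4 := mul_left_cancel₀ (ne_of_gt hβ) h3
    linarith
  · intro h
    rw [h]

lemma Qb_symm {N : ℕ} (T : Fin N → Fin N → ℝ) (hsym : ∀ i j, T i j = T j i)
    (x y : Fin N → ℝ) : Qb T x y = Qb T y x := by
  unfold Qb
  rw [Finset.sum_comm]
  refine Finset.sum_congr rfl fun i _ => Finset.sum_congr rfl fun j _ => ?_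
  rw [hsym j i]
  ring

end BMaux

open BMaux in
/-- **The synchronous Boltzmann machine is reversible iff `T` is symmetric.**
The transition matrix `(p_{ση})` on `{−1,1}^N` satisfies the Kolmogorov cyclic
condition — for every finite cycle of states `σ^(1), …, σ^(s)` in `{−1,1}^N` the
product of transition probabilities around the cycle equals the product around the
reversed cycle — if and only if `T_{ij} = T_{ji}` for all `i, j`.  (Since all transition
probabilities are strictly positive, the chain is irreducible and this is equivalent to
reversibility of the stationary chain.) -/
theorem bmP_kolmogorov_iff_symmetric
    {N : ℕ} (hN : 1 ≤ N) (T : Fin N → Fin N → ℝ) (U : Fin N → ℝ)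
    (β : ℝ) (hβ : 0 < β) :
    (∀ (s : ℕ) (f : Fin (s + 1) → Fin N → ℝ),
      (∀ l i, f l i = 1 ∨ f l i = -1) →
      ∏ l, bmP T U β (f l) (f (l + 1)) = ∏ l, bmP T U β (f (l + 1)) (f l)) ↔
    (∀ i j, T i j = T j i) := by
  constructor
  · intro hcyc i j
    rcases eq_or_ne i j with rfl | hij
    · rfl
    set u : Fin N → ℝ := fun _ => 1 with hu
    set v : Fin N → ℝ := Function.update u i (-1) with hv
    set w : Fin N → ℝ := Function.update v j (-1) with hw
    have hvj : v j = 1 := by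
      rw [hv, Function.update_of_ne (Ne.symm hij)]
    have hui : u i = 1 := rfl
    have hvals : ∀ (l : Fin 3) (k : Fin N), (![u, v, w]) l k = 1 ∨ (![u, v, w]) l k = -1 := by
      intro l k
      have h1 : ∀ k, u k = 1 ∨ u k = -1 := fun k => Or.inl rfl
      have h2 : ∀ k, v k = 1 ∨ v k = -1 := by
        intro k
        rcases eq_or_ne k i with rfl | h
        · right; rw [hv, Function.update_self]
        · rw [hv, Function.update_of_ne h]; exact h1 k
      have h3 : ∀ k, w k = 1 ∨ w k = -1 := by
        intro k
        rcases eq_or_ne k j with rfl | h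
        · right; rw [hw, Function.update_self]
        · rw [hw, Function.update_of_ne h]; exact h2 k
      fin_cases l <;> simp only [Matrix.cons_val_zero, Matrix.cons_val_one,
        Matrix.head_cons, Matrix.cons_val_two, Matrix.tail_cons]
      · exact h1 k
      · exact h2 k
      · exact h3 k
    have key := (cycle_iff T U β hβ (![u, v, w] : Fin 3 → Fin N → ℝ)).mp
      (hcyc 2 ![u, v, w] hvals)
    have e0 : ((0 : Fin 3) + 1) = 1 := rfl
    have e1 : ((1 : Fin 3) + 1) = 2 := rfl
    have e2 : ((2 : Fin 3) + 1) = 0 := rfl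
    rw [Fin.sum_univ_three, Fin.sum_univ_three, e0, e1, e2] at key
    simp only [Matrix.cons_val_zero, Matrix.cons_val_one, Matrix.head_cons,
      Matrix.cons_val_two, Matrix.tail_cons] at key
    -- key : Qb T v u + Qb T w v + Qb T u w = Qb T u v + Qb T v w + Qb T w u
    have h1 : Qb T v u = Qb T u u + (-1 - u i) * ∑ m, T i m * u m := by
      rw [hv, Qb_update_left]
    have h2 : Qb T w v = Qb T v v + (-1 - v j) * ∑ m, T j m * v m := by
      rw [hw, Qb_update_left]
    have h3 : Qb T u w = Qb T u v + (∑ m, u m * T m j) * (-1 - v j) := by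
      rw [hw, Qb_update_right]
    have h4 : Qb T u v = Qb T u u + (∑ m, u m * T m i) * (-1 - u i) := by
      rw [hv, Qb_update_right]
    have h5 : Qb T v w = Qb T v v + (∑ m, v m * T m j) * (-1 - v j) := by
      rw [hw, Qb_update_right]
    have h6 : Qb T w u = Qb T v u + (-1 - v j) * ∑ m, T j m * u m := by
      rw [hw, Qb_update_left]
    have h7 : ∑ m, T j m * v m = (∑ m, T j m * u m) + T j i * (-1 - u i) := by
      rw [hv, mul_sum_update]
    have h8 : ∑ m, v m * T m j = (∑ m, u m * T m j) + (-1 - u i) * T i j := by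
      rw [hv, sum_update_mul]
    rw [hui, hvj] at *
    linarith
  · intro hsym s f hf
    rw [cycle_iff T U β hβ f]
    exact Finset.sum_congr rfl fun l _ => Qb_symm T hsym (f (l + 1)) (f l)
end

section
/- Fix N ≥ 1, a symmetric real matrix T = (T_{ij})_{1≤i,j≤N} (T_{ij} = T_{ji} for all i, j), and thresholds U_1, …, U_N ∈ ℝ. Consider the deterministic synchronous McCulloch–Pitts dynamics on {−1,1}^N: F(σ)_i = sign(h_i(σ)), where h_i(σ) = Σ_{j=1}^N T_{ij} σ_j − U_i, defined at states σ where h_i(σ) ≠ 0 for all i. Then there is no periodic orbit of length s ≥ 3: there do not exist pairwise distinct states σ^(1), …, σ^(s) ∈ {−1,1}^N with s ≥ 3 such that h_i(σ^(k)) ≠ 0 for all i and k, and F(σ^(k)) = σ^(k+1) for 1 ≤ k ≤ s−1 and F(σ^(s)) = σ^(1). -/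
/-- **No periodic orbits of length ≥ 3 in the synchronous McCulloch–Pitts network with
symmetric weights.**  Fix a symmetric real matrix `T` and thresholds `U`.  For the
deterministic synchronous dynamics `F(σ)_i = sign(h_i(σ))` on `{−1,1}^N`, where
`h_i(σ) = ∑_j T_{ij} σ_j − U_i` and `sign x = 1` if `x > 0`, `−1` if `x < 0`, there do
not exist pairwise distinct states `σ^(1), …, σ^(s)` with `s ≥ 3` such that
`h_i(σ^(k)) ≠ 0` for all `i, k` and `F(σ^(k)) = σ^(k+1)` cyclically. -/
theorem no_long_periodic_orbit_of_symmetric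
    {N : ℕ} (hN : 1 ≤ N) (T : Fin N → Fin N → ℝ) (U : Fin N → ℝ)
    (hT : ∀ i j, T i j = T j i) :
    ¬ ∃ (s : ℕ) (f : Fin (s + 3) → Fin N → ℝ),
        Function.Injective f ∧
        (∀ k i, f k i = 1 ∨ f k i = -1) ∧
        (∀ k i, (∑ j, T i j * f k j - U i) ≠ 0) ∧
        (∀ k i, f (k + 1) i =
          if 0 < ∑ j, T i j * f k j - U i then (1 : ℝ) else -1) := by
  rintro ⟨s, f, hinj, hpm, hne, hdyn⟩
  -- the local field
  set h : Fin (s + 3) → Fin N → ℝ := fun k i => ∑ j, T i j * f k j - U i with hh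
  -- the two-step energy
  set E : Fin (s + 3) → ℝ := fun k =>
    ∑ i, U i * (f k i + f (k + 1) i) - ∑ i, f (k + 1) i * ∑ j, T i j * f k j with hE
  -- pointwise nonnegativity of the energy-drop terms
  have hpt : ∀ (k : Fin (s + 3)) (i : Fin N),
      0 ≤ (f (k + 1) i - f (k - 1) i) * h k i := by
    intro k i
    have hd := hdyn k i
    have hb := hpm (k - 1) i
    have hne' : h k i ≠ 0 := hne k i
    simp only [hh] at *
    rcases lt_or_gt_of_ne hne' with hlt | hgt
    · rw [if_neg (not_lt.mpr hlt.le)] at hd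
      rcases hb with hb | hb <;> rw [hd, hb] <;> nlinarith
    · rw [if_pos hgt] at hd
      rcases hb with hb | hb <;> rw [hd, hb] <;> nlinarith
  -- symmetry of the bilinear form
  have hsym : ∀ a b : Fin (s + 3),
      ∑ i, f a i * ∑ j, T i j * f b j = ∑ i, f b i * ∑ j, T i j * f a j := by
    intro a b
    simp_rw [Finset.mul_sum]
    rw [Finset.sum_comm]
    refine Finset.sum_congr rfl fun i _ => Finset.sum_congr rfl fun j _ => ?_
    rw [hT j i]; ring
  -- energy decrease formula
  have hdiff : ∀ k : Fin (s + 3),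
      E (k - 1) - E k = ∑ i, (f (k + 1) i - f (k - 1) i) * h k i := by
    intro k
    have h1 : k - 1 + 1 = k := sub_add_cancel k 1
    have split2 : ∑ i, (f (k + 1) i - f (k - 1) i) * h k i
        = ((∑ i, f (k + 1) i * ∑ j, T i j * f k j) + ∑ i, U i * f (k - 1) i)
          - ((∑ i, f (k - 1) i * ∑ j, T i j * f k j) + ∑ i, U i * f (k + 1) i) := by
      rw [← Finset.sum_add_distrib, ← Finset.sum_add_distrib, ← Finset.sum_sub_distrib]
      refine Finset.sum_congr rfl fun i _ => ?_
      simp only [hh]; ring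
    have splitU : ∀ a b : Fin (s + 3),
        ∑ i, U i * (f a i + f b i) = (∑ i, U i * f a i) + ∑ i, U i * f b i := by
      intro a b
      rw [← Finset.sum_add_distrib]
      exact Finset.sum_congr rfl fun i _ => by ring
    rw [split2]
    simp only [hE, h1]
    rw [hsym k (k - 1), splitU, splitU]
    ring
  -- the cyclic sum of energy drops is zero
  have hsumzero : ∑ k : Fin (s + 3), ∑ i, (f (k + 1) i - f (k - 1) i) * h k i = 0 := by
    have hz : ∑ k : Fin (s + 3), (E (k - 1) - E k) = 0 := by
      rw [Finset.sum_sub_distrib]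
      have he : ∑ k : Fin (s + 3), E (k - 1) = ∑ k : Fin (s + 3), E k :=
        Fintype.sum_equiv (Equiv.subRight (1 : Fin (s + 3))) _ _ (fun k => rfl)
      rw [he, sub_self]
    rw [← hz]
    exact Finset.sum_congr rfl fun k _ => (hdiff k).symm
  -- hence every drop term vanishes, so f (k+1) = f (k-1)
  have hzero : ∀ (k : Fin (s + 3)) (i : Fin N), f (k + 1) i = f (k - 1) i := by
    have h1 : ∀ k ∈ Finset.univ, (0:ℝ) ≤ ∑ i, (f (k + 1) i - f (k - 1) i) * h k i :=
      fun k _ => Finset.sum_nonneg fun i _ => hpt k i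
    have h2 := (Finset.sum_eq_zero_iff_of_nonneg h1).mp hsumzero
    intro k i
    have h3 := (Finset.sum_eq_zero_iff_of_nonneg
      (fun i (_ : i ∈ Finset.univ) => hpt k i)).mp (h2 k (Finset.mem_univ k)) i
      (Finset.mem_univ i)
    have hne' : h k i ≠ 0 := hne k i
    have h4 : f (k + 1) i - f (k - 1) i = 0 := by
      rcases mul_eq_zero.mp h3 with h4 | h4
      · exact h4
      · exact absurd h4 hne'
    linarith
  -- contradiction with injectivity: f 2 = f 0
  have heq2 : f (1 + 1) = f (1 - 1) := funext fun i => hzero 1 i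
  have h20 : (1 + 1 : Fin (s + 3)) = 1 - 1 := hinj heq2
  rw [sub_self] at h20
  have hv := congrArg Fin.val h20
  rw [Fin.val_add, Fin.val_one, Fin.val_zero, Nat.mod_eq_of_lt (by omega)] at hv
  omega
end
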